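/- Let ε_{1−s} … ε_{−1} ★ ε_1 … ε_{k−s} be a primitive landscape (so each ε_i ∈ {0, 1, −}, with ε_{1−s}, ε_{k−s} ∈ {0, 1}) with associated Boolean function f(x) = x_s ⊕ ∏_{i : ε_i ∈ {0,1}} (x_{s+i} ⊕ ε_i ⊕ 1) on F_2^k. Suppose that for each index d_1 with ε_{d_1} ∈ {0, 1}, there exists d_2 such that ε_{d_2} and ε_{d_1+d_2} are defined and {ε_{d_2}, ε_{d_1+d_2}} = {0, 1}. Then f is a proper lifting, i.e., f is a (k, n)-lifting for every n ≥ k. -/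

import Mathlib

/-- The shift-invariant map `F : F_2^n → F_2^n` induced by a local rule
`f : F_2^k → F_2`, namely `F(x)_i = f(x_i, x_{i+1}, …, x_{i+k-1})`
with indices taken modulo `n`. -/
def induced (k n : ℕ) (f : (Fin k → ZMod 2) → ZMod 2) :
    (ZMod n → ZMod 2) → ZMod n → ZMod 2 :=
  fun x i => f fun j => x (i + ((j : ℕ) : ZMod n))

/-- The shift-invariant map induced by `f : F_2^k → F_2` with anchor shifted by `j0`
(0-based), namely `F(x)_i = f(x_{i-j0}, x_{i-j0+1}, …, x_{i-j0+k-1})`, indices mod `n`.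
For a 1-based special index `j` this is `F(x)_i = f(x_{i-j+1}, …, x_{i-j+k})`
with `j0 = j - 1`. -/
def inducedShift (k n : ℕ) (j0 : ℕ) (f : (Fin k → ZMod 2) → ZMod 2) :
    (ZMod n → ZMod 2) → ZMod n → ZMod 2 :=
  fun x i => f fun m => x (i - (j0 : ZMod n) + ((m : ℕ) : ZMod n))

/-- A Boolean function `g` depends on the coordinate `i` if there are two inputs
differing only in coordinate `i` on which `g` takes different values. -/
def DependsOn' {k : ℕ} (g : (Fin k → ZMod 2) → ZMod 2) (i : Fin k) : Prop :=
  ∃ x y : Fin k → ZMod 2, (∀ j, j ≠ i → x j = y j) ∧ g x ≠ g y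

/-- The cyclic right shift on `F_2^n`. -/
def shiftR (n : ℕ) : (ZMod n → ZMod 2) → ZMod n → ZMod 2 :=
  fun x i => x (i - 1)



section Aux

variable {k n : ℕ}

/-- matching indicator product -/
def M0 (ε : Fin k → Option (ZMod 2)) (x : ZMod n → ZMod 2) (i : ZMod n) : ZMod 2 :=
  ∏ p : Fin k, (ε p).elim 1 (fun b => x (i + ((p : ℕ) : ZMod n)) + b + 1)

/-- matching predicate -/
def PredM (ε : Fin k → Option (ZMod 2)) (x : ZMod n → ZMod 2) (i : ZMod n) : Prop :=
  ∀ p : Fin k, ∀ b, ε p = some b → x (i + ((p : ℕ) : ZMod n)) = b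

instance (ε : Fin k → Option (ZMod 2)) (x : ZMod n → ZMod 2) (i : ZMod n) :
    Decidable (PredM ε x i) := by
  unfold PredM; infer_instance

lemma factor2 : ∀ a b : ZMod 2, a + b + 1 = if a = b then 1 else 0 := by decide

lemma z2_add_self : ∀ a : ZMod 2, a + a = 0 := by decide

lemma M0_eq (ε : Fin k → Option (ZMod 2)) (x : ZMod n → ZMod 2) (i : ZMod n) :
    M0 ε x i = if PredM ε x i then 1 else 0 := by
  have h1 : M0 ε x i = ∏ p : Fin k,
      (if (∀ b, ε p = some b → x (i + ((p : ℕ) : ZMod n)) = b) then (1 : ZMod 2) else 0) := by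
    unfold M0
    refine Finset.prod_congr rfl fun p _ => ?_
    cases hp : ε p with
    | none => simp
    | some b => simp [factor2]
  rw [h1, Finset.prod_boole]
  by_cases h : PredM ε x i
  · rw [if_pos h, if_pos]
    intro p _ b hb; exact h p b hb
  · rw [if_neg h, if_neg]
    intro hall
    exact h fun p b hb => hall p (Finset.mem_univ p) b hb

end Aux


/-- a primitive landscape is encoded as `ε : Fin k → Option (ZMod 2)`
(positions 0-based along the whole string, `some b` for a symbol `b ∈ {0,1}` and `none`
for `−`), with the star `★` at position `s0` (`ε s0 = none`) and the first and last
symbols in `{0,1}`. Its associated Boolean function is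
`f(x) = x_{s0} ⊕ ∏_{p : ε p = some b} (x_p ⊕ b ⊕ 1)`. If for each position `p1`
carrying a symbol in `{0,1}` (relative offset `d1 = p1 - s0`) there are positions
`p2, p3` with `p3 - s0 = (p2 - s0) + (p1 - s0)` (i.e. offsets `d2` and `d1 + d2`)
carrying the two distinct symbols `0` and `1`, then `f` is a proper lifting:
a `(k,n)`-lifting for every `n ≥ k`. -/
theorem stmt3 (k : ℕ) (hk : 0 < k) (s0 : Fin k)
    (ε : Fin k → Option (ZMod 2))
    (hstar : ε s0 = none)
    (hfirst : (ε ⟨0, hk⟩).isSome) (hlast : (ε ⟨k - 1, by omega⟩).isSome)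
    (hcond : ∀ p1 : Fin k, (ε p1).isSome →
      ∃ p2 p3 : Fin k, ((p3 : ℕ) : ℤ) = ((p2 : ℕ) : ℤ) + ((p1 : ℕ) : ℤ) - ((s0 : ℕ) : ℤ) ∧
        ∃ b2 b3 : ZMod 2, ε p2 = some b2 ∧ ε p3 = some b3 ∧ b2 ≠ b3) :
    ∀ n, k ≤ n → Function.Bijective (induced k n
      (fun x => x s0 + ∏ p : Fin k, (ε p).elim 1 (fun b => x p + b + 1))) := by
  intro n hn
  set c : ZMod n := ((s0 : ℕ) : ZMod n) with hc
  -- key non-overlap lemma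
  have key : ∀ (x : ZMod n → ZMod 2) (i j : ZMod n) (p1 : Fin k) (b1 : ZMod 2),
      PredM ε x i → PredM ε x j → ε p1 = some b1 →
      j ≠ i + ((p1 : ℕ) : ZMod n) - c := by
    intro x i j p1 b1 hi hj hp1 hj_eq
    obtain ⟨p2, p3, hint, b2, b3, h2, h3, hne⟩ := hcond p1 (by rw [hp1]; rfl)
    have hcast : ((p3 : ℕ) : ZMod n) = ((p2 : ℕ) : ZMod n) + ((p1 : ℕ) : ZMod n) - c := by
      have h := congrArg (fun z : ℤ => (z : ZMod n)) hint
      push_cast at h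
      rw [hc]; push_cast
      linear_combination h
    have e1 : x (i + ((p3 : ℕ) : ZMod n)) = b3 := hi p3 b3 h3
    have e2 : x (j + ((p2 : ℕ) : ZMod n)) = b2 := hj p2 b2 h2
    have heq : j + ((p2 : ℕ) : ZMod n) = i + ((p3 : ℕ) : ZMod n) := by
      rw [hj_eq, hcast]; ring
    rw [heq, e1] at e2
    exact hne e2.symm
  -- the involution H
  set H : (ZMod n → ZMod 2) → ZMod n → ZMod 2 :=
    fun x i => x i + M0 ε x (i - c) with hH
  have predH : ∀ (x : ZMod n → ZMod 2) (m : ZMod n), PredM ε x m → PredM ε (H x) m := by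
    intro x m hm p b hp
    have hzero : M0 ε x (m + ((p : ℕ) : ZMod n) - c) = 0 := by
      rw [M0_eq, if_neg]
      intro hpred
      exact key x m (m + ((p : ℕ) : ZMod n) - c) p b hm hpred hp rfl
    show x (m + ((p : ℕ) : ZMod n)) + M0 ε x (m + ((p : ℕ) : ZMod n) - c) = b
    rw [hzero, add_zero]
    exact hm p b hp
  have predH' : ∀ (x : ZMod n → ZMod 2) (m : ZMod n), PredM ε (H x) m → PredM ε x m := by
    intro x m hm p b hp
    have hHv : x (m + ((p : ℕ) : ZMod n)) + M0 ε x (m + ((p : ℕ) : ZMod n) - c) = b :=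
      hm p b hp
    by_cases hz : M0 ε x (m + ((p : ℕ) : ZMod n) - c) = 0
    · rw [hz, add_zero] at hHv
      exact hHv
    · exfalso
      have hpred : PredM ε x (m + ((p : ℕ) : ZMod n) - c) := by
        rw [M0_eq] at hz
        by_contra hc'
        rw [if_neg hc'] at hz
        exact hz rfl
      have h1 : PredM ε (H x) (m + ((p : ℕ) : ZMod n) - c) := predH x _ hpred
      exact key (H x) m (m + ((p : ℕ) : ZMod n) - c) p b hm h1 hp rfl
  -- H is an involution
  have hinv : Function.Involutive H := by
    intro x
    funext i
    have hM : M0 ε (H x) (i - c) = M0 ε x (i - c) := by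
      rw [M0_eq, M0_eq]
      congr 1
      simp only [eq_iff_iff]
      exact ⟨fun h => predH' x _ h, fun h => predH x _ h⟩
    show H x i + M0 ε (H x) (i - c) = x i
    rw [hM]
    show (x i + M0 ε x (i - c)) + M0 ε x (i - c) = x i
    rw [add_assoc, z2_add_self, add_zero]
  -- F = shift ∘ H
  have hF : induced k n
      (fun x => x s0 + ∏ p : Fin k, (ε p).elim 1 (fun b => x p + b + 1))
      = (fun z : ZMod n → ZMod 2 => fun i => z (i + c)) ∘ H := by
    funext x i
    show x (i + c) + M0 ε x i = x (i + c) + M0 ε x (i + c - c)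
    rw [add_sub_cancel_right]
  rw [hF]
  apply Function.Bijective.comp
  · constructor
    · intro a b hab
      funext i
      have h := congrFun hab (i - c)
      simpa using h
    · intro z
      exact ⟨fun i => z (i - c), by funext i; simp⟩
  · exact hinv.bijective
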